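/- Let C be a Hom-finite, Krull-Schmidt, k-linear triangulated category with a Serre functor S, and let U and M be indecomposable objects of C. The following are equivalent: (1) s^U is a composition factor of Hom_C(-,M); (2) there is a non-zero morphism U → M; (3) there is a non-zero morphism S^{-1}(M) → U; (4) s^{S^{-1}(M)} is a composition factor of Hom_C(-,U). -/

import Mathlib

namespace GradedCenter

open CategoryTheory CategoryTheory.Limits CategoryTheory.Pretriangulated Opposite

universe v u

section BasicDefs

variable {C : Type u} [Category.{v} C]

/-- An object of a category with zero morphisms is *indecomposable* if it is nonzero and
its only idempotent endomorphisms are `0` and the identity. -/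
def Indec [HasZeroMorphisms C] (X : C) : Prop :=
  ¬ IsZero X ∧ ∀ e : X ⟶ X, e ≫ e = e → e = 0 ∨ e = 𝟙 X

/-- A morphism is *irreducible* if it is neither a split monomorphism nor a split
epimorphism, and in any factorization one of the two factors is split. -/
def IsIrreducibleHom {X Y : C} (f : X ⟶ Y) : Prop :=
  ¬ IsSplitMono f ∧ ¬ IsSplitEpi f ∧
    ∀ ⦃Z : C⦄ (g : X ⟶ Z) (h : Z ⟶ Y), g ≫ h = f → IsSplitMono g ∨ IsSplitEpi h

/-- The property of being a (possibly empty) finite composite of irreducible morphisms. -/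
inductive IrrPath : ∀ {X Y : C}, (X ⟶ Y) → Prop
  | id (X : C) : IrrPath (𝟙 X)
  | comp {X Y Z : C} {f : X ⟶ Y} {g : Y ⟶ Z} :
      IrrPath f → IsIrreducibleHom g → IrrPath (f ≫ g)

/-- `f` is a sum of (finite) composites of irreducible morphisms. -/
def IsSumOfCompositesOfIrreducibles [Preadditive C] {X Y : C} (f : X ⟶ Y) : Prop :=
  f ∈ AddSubgroup.closure {g : X ⟶ Y | IrrPath g}

/-- Two objects lie in the same component of the Auslander-Reiten quiver:  the equivalence
relation generated by isomorphism together with the existence of an irreducible morphism in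
either direction. -/
def SameARComponent (X Y : C) : Prop :=
  Relation.EqvGen
    (fun U V => Nonempty (U ≅ V) ∨ (∃ f : U ⟶ V, IsIrreducibleHom f) ∨
      ∃ f : V ⟶ U, IsIrreducibleHom f) X Y

/-- Finiteness of a collection of objects up to isomorphism. -/
def FinitelyManyIsoClasses (s : Set C) : Prop :=
  ∃ L : List C, ∀ X ∈ s, ∃ Y ∈ L, Nonempty (X ≅ Y)

end BasicDefs

section Triangulated

variable {C : Type u} [Category.{v} C] [Preadditive C] [HasZeroObject C]
  [HasShift C ℤ] [∀ n : ℤ, (shiftFunctor C n).Additive] [Pretriangulated C]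

/-- `U ⟶ V ⟶ M ⟶ ΣU` is an Auslander--Reiten triangle:  a non-split distinguished
triangle with indecomposable end terms such that every morphism to `M` which is
not a split epimorphism lifts through `V ⟶ M`. -/
structure IsARTriangle {U V M : C} (f : U ⟶ V) (g : V ⟶ M) (h : M ⟶ U⟦(1 : ℤ)⟧) : Prop where
  distinguished : Triangle.mk f g h ∈ distTriang C
  indec₁ : Indec U
  indec₃ : Indec M
  nonsplit : h ≠ 0
  lift : ∀ ⦃W : C⦄ (w : W ⟶ M), ¬ IsSplitEpi w → ∃ w' : W ⟶ V, w' ≫ g = w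

/-- A morphism `f : X ⟶ Y` between indecomposable objects is *almost vanishing* if it is,
up to an identification of the target, the third morphism of an Auslander--Reiten
triangle. -/
def AlmostVanishing {X Y : C} (f : X ⟶ Y) : Prop :=
  ∃ (U V : C) (a : U ⟶ V) (b : V ⟶ X) (c : X ⟶ U⟦(1 : ℤ)⟧) (e : (U⟦(1 : ℤ)⟧ : C) ≅ Y),
    IsARTriangle a b c ∧ c ≫ e.hom = f

end Triangulated

section Serre

variable (k : Type u) [Field k]
variable {C : Type u} [Category.{v} C] [Preadditive C] [Linear k C]

/-- The data exhibiting `S` as a Serre functor: an inverse (so `S` is a self-equivalence)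
together with a bifunctorial nondegenerate pairing realizing
`D Hom(X, Y) ≅ Hom(Y, S X)`. -/
structure SerreStructure (S : C ⥤ C) where
  /-- an inverse functor for `S` -/
  inv : C ⥤ C
  invS : S ⋙ inv ≅ 𝟭 C
  Sinv : inv ⋙ S ≅ 𝟭 C
  /-- the trace pairing `Hom(X,Y) ⊗ Hom(Y, S X) → k` -/
  pairing : ∀ (X Y : C), (X ⟶ Y) →ₗ[k] (Y ⟶ S.obj X) →ₗ[k] k
  natX : ∀ {X X' Y : C} (b : X' ⟶ X) (f : X ⟶ Y) (g : Y ⟶ S.obj X'),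
    pairing X Y f (g ≫ S.map b) = pairing X' Y (b ≫ f) g
  natY : ∀ {X Y Y' : C} (a : Y ⟶ Y') (f : X ⟶ Y) (g : Y' ⟶ S.obj X),
    pairing X Y f (a ≫ g) = pairing X Y' (f ≫ a) g
  nondegen : ∀ (X Y : C),
    Function.Bijective (fun g : Y ⟶ S.obj X => (pairing X Y).flip g)

end Serre





section FunCat

variable (k : Type u) [Field k]
variable (C : Type u) [Category.{v} C] [Preadditive C] [Linear k C]

def IsLinearFunctor (F : Cᵒᵖ ⥤ ModuleCat.{v} k) : Prop :=
  (∀ ⦃X Y : C⦄ (f g : Y ⟶ X), F.map (f + g).op = F.map f.op + F.map g.op) ∧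
  (∀ ⦃X Y : C⦄ (c : k) (f : Y ⟶ X), F.map (c • f).op = c • F.map f.op)

abbrev FunCat := ObjectProperty.FullSubcategory (IsLinearFunctor k C)

variable {C}

def yon (M : C) : FunCat k C :=
  ⟨(linearYoneda k C).obj M, by
    constructor
    · intro X Y f g
      ext h
      exact Preadditive.add_comp _ _ _ f g h
    · intro X Y c f
      ext h
      exact CategoryTheory.Linear.smul_comp _ _ _ c f h⟩

def yonMap {M N : C} (f : M ⟶ N) : yon k M ⟶ yon k N :=
  ⟨(linearYoneda k C).map f⟩

/-- The value at `X` of the radical subfunctor of `Hom_C(-, M)`: the subspace spanned by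
the morphisms `X.unop ⟶ M` that are not split epimorphisms (for `X.unop` indecomposable
in a Krull-Schmidt category these are exactly the non-isomorphisms `X.unop ⟶ M`). -/
def radSub (M : C) (X : Cᵒᵖ) : Submodule k (X.unop ⟶ M) :=
  Submodule.span k {f : X.unop ⟶ M | ¬ IsSplitEpi f}

lemma radSub_le_comap (M : C) {X Y : Cᵒᵖ} (u : X ⟶ Y) :
    radSub k M X ≤ (radSub k M Y).comap (Linear.leftComp k M u.unop) := by
  rw [radSub, Submodule.span_le]
  intro f hf
  simp only [Set.mem_setOf_eq] at hf
  refine Submodule.subset_span ?_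
  simp only [Set.mem_setOf_eq, Linear.leftComp_apply]
  intro hse
  rcases hse.exists_splitEpi with ⟨⟨s, hs⟩⟩
  refine hf ⟨⟨⟨s ≫ u.unop, ?_⟩⟩⟩
  rw [Category.assoc]
  exact hs

/-- The simple functor `s^M = Hom_C(-,M)/Rad_C(-,M)`. -/
def sFun (M : C) : FunCat k C :=
  ⟨{ obj := fun X => ModuleCat.of k ((X.unop ⟶ M) ⧸ radSub k M X)
     map := fun {X Y} u =>
       ModuleCat.ofHom (Submodule.mapQ _ _ (Linear.leftComp k M u.unop)
        (radSub_le_comap k M u))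
     map_id := by
       intro X
       ext f
       exact congrArg Submodule.Quotient.mk (Category.id_comp f)
     map_comp := by
       intro X Y Z u v
       ext f
       exact congrArg Submodule.Quotient.mk (Category.assoc _ _ f) },
   by
    constructor
    · intro X Y f g
      ext h
      exact congrArg Submodule.Quotient.mk (Preadditive.add_comp _ _ _ f g h)
    · intro X Y c f
      ext h
      exact congrArg Submodule.Quotient.mk
        (CategoryTheory.Linear.smul_comp _ _ _ c f h)⟩

/-- The canonical quotient map `Hom_C(-,M) ⟶ s^M`. -/
def sQuot (M : C) : yon k M ⟶ sFun k M where
  hom.app X := ModuleCat.ofHom (radSub k M X).mkQ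
  hom.naturality := by
    intro X Y u
    ext f
    rfl

end FunCat


section FunCatProps

variable (k : Type u) [Field k]
variable (C : Type u) [Category.{v} C] [Preadditive C] [Linear k C]

/-- A functor is finitely generated if it is an epimorphic image of a representable. -/
def FinitelyGenerated (F : FunCat k C) : Prop :=
  ∃ (M : C) (p : yon k M ⟶ F), Epi p

/-- A functor `F` is finitely presented if there is an exact sequence
`Hom(-,M₁) ⟶ Hom(-,M₀) ⟶ F ⟶ 0`. -/
def FinitelyPresented (F : FunCat k C) : Prop :=
  ∃ (M₁ M₀ : C) (a : yon k M₁ ⟶ yon k M₀) (p : yon k M₀ ⟶ F) (w : a ≫ p = 0),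
    Nonempty (IsColimit (CokernelCofork.ofπ p w))

/-- `S` is (isomorphic to) a subquotient of `F`:  there are subfunctors `G₀ ⊆ G₁ ⊆ F`
with `G₁/G₀ ≅ S`. -/
def IsCompositionFactorOf (S F : FunCat k C) : Prop :=
  ∃ (G₀ G₁ : FunCat k C) (ι : G₀ ⟶ G₁) (j : G₁ ⟶ F) (π : G₁ ⟶ S) (w : ι ≫ π = 0),
    Mono ι ∧ Mono j ∧ Nonempty (IsColimit (CokernelCofork.ofπ π w))

/-- `F` has a finite composition series `0 = G₀ ⊆ G₁ ⊆ ⋯ ⊆ Gₙ = F` with simple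
subquotients. -/
def HasFiniteLength (F : FunCat k C) : Prop :=
  ∃ (n : ℕ) (G : Fin (n + 1) → FunCat k C),
    IsZero (G 0) ∧ Nonempty (G (Fin.last n) ≅ F) ∧
    ∀ i : Fin n, ∃ (ι : G i.castSucc ⟶ G i.succ) (S : FunCat k C) (π : G i.succ ⟶ S)
      (w : ι ≫ π = 0), Mono ι ∧ Simple S ∧ Nonempty (IsColimit (CokernelCofork.ofπ π w))

/-- `0 ⟶ A ⟶ B ⟶ D ⟶ 0` is a short exact sequence: `i` is a kernel of `p` and `p` is a
cokernel of `i`. -/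
def IsShortExact {A B D : FunCat k C} (i : A ⟶ B) (p : B ⟶ D) (w : i ≫ p = 0) : Prop :=
  Nonempty (IsLimit (KernelFork.ofι i w)) ∧ Nonempty (IsColimit (CokernelCofork.ofπ p w))

/-- `F` has a finite projective resolution, expressed by a finite chain of syzygies. -/
def FiniteProjectiveDimension (F : FunCat k C) : Prop :=
  ∃ (m : ℕ) (P : Fin (m + 1) → FunCat k C) (K : Fin (m + 2) → FunCat k C),
    (∀ i, Projective (P i)) ∧ Nonempty (K 0 ≅ F) ∧ IsZero (K (Fin.last (m + 1))) ∧
    ∀ i : Fin (m + 1), ∃ (a : K i.succ ⟶ P i) (b : P i ⟶ K i.castSucc) (w : a ≫ b = 0),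
      IsShortExact k C a b w

/-- `p : P ⟶ F` is a projective cover: `P` is projective, `p` is epi, and `p` is
essential. -/
def IsProjectiveCover {P F : FunCat k C} (p : P ⟶ F) : Prop :=
  Projective P ∧ Epi p ∧ ∀ ⦃G : FunCat k C⦄ (g : G ⟶ P), Epi (g ≫ p) → Epi g

end FunCatProps

section KS

/-- A Krull--Schmidt category: every object is a finite biproduct of indecomposable
objects, and indecomposable objects have local endomorphism rings. -/
def IsKrullSchmidt (C : Type u) [Category.{v} C] [Preadditive C]
    [HasFiniteBiproducts C] : Prop :=
  (∀ X : C, ∃ (n : ℕ) (f : Fin n → C), Nonempty (X ≅ ⨁ f) ∧ ∀ i, Indec (f i)) ∧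
  (∀ X : C, Indec X → IsLocalRing (End X))

end KS

section TreeClass

variable {C : Type u} [Category.{v} C] [Preadditive C] [HasZeroObject C]
  [HasShift C ℤ] [∀ n : ℤ, (shiftFunctor C n).Additive] [Pretriangulated C]
  [HasBinaryBiproducts C]

/-- The Auslander--Reiten quiver component of `N` has tree class `A_∞`:  it is covered by
a `ℤA_∞`-shaped family, with `M i 0` on the rim, Auslander--Reiten translate
`τ (M i j) = M (i-1) j`, and meshes of the standard shape. -/
def ComponentTreeClassAInfinity (N : C) : Prop :=
  ∃ M : ℤ → ℕ → C,
    (∀ (i : ℤ) (j : ℕ), Indec (M i j) ∧ SameARComponent (M i j) N) ∧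
    (∀ U : C, Indec U → SameARComponent U N → ∃ (i : ℤ) (j : ℕ), Nonempty (U ≅ M i j)) ∧
    (∀ i : ℤ, ∃ (a : M (i - 1) 0 ⟶ M (i - 1) 1) (b : M (i - 1) 1 ⟶ M i 0)
      (c : M i 0 ⟶ ((M (i - 1) 0)⟦(1 : ℤ)⟧ : C)), IsARTriangle a b c) ∧
    (∀ (i : ℤ) (j : ℕ), ∃ (a : M (i - 1) (j + 1) ⟶ (M (i - 1) (j + 2) ⊞ M i j))
      (b : (M (i - 1) (j + 2) ⊞ M i j) ⟶ M i (j + 1))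
      (c : M i (j + 1) ⟶ ((M (i - 1) (j + 1))⟦(1 : ℤ)⟧ : C)), IsARTriangle a b c)

end TreeClass

section Aux
variable {k : Type u} [Field k]
variable {C : Type u} [Category.{v} C] [Preadditive C] [Linear k C]

lemma isSplitEpi_of_mul_eq_one {U : C} (g t : End U) (h : g * t = 1) :
    IsSplitEpi (g : U ⟶ U) := ⟨⟨t, h⟩⟩

lemma isSplitEpi_of_isUnit {U : C} (g : End U) (h : IsUnit g) :
    IsSplitEpi (g : U ⟶ U) :=
  isSplitEpi_of_mul_eq_one g ↑h.unit⁻¹ h.mul_val_inv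

/-- The set of non-split-epimorphisms in `End U` forms a submodule when `End U` is local. -/
def nonSplitEpiSubmodule (U : C) (hU1 : ¬ IsZero U) (hloc : IsLocalRing (End U)) :
    Submodule k (U ⟶ U) where
  carrier := {g | ¬ IsSplitEpi g}
  zero_mem' := by
    intro h0
    rcases h0.exists_splitEpi with ⟨⟨s, hs⟩⟩
    rw [comp_zero] at hs
    exact hU1 ((IsZero.iff_id_eq_zero U).mpr hs.symm)
  add_mem' := by
    intro a b ha hb hab
    rcases hab.exists_splitEpi with ⟨⟨s, hs⟩⟩
    have h1 : (show End U from a) * (show End U from s)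
        + (show End U from b) * (show End U from s) = 1 := by
      show (s ≫ a) + (s ≫ b) = 𝟙 U
      rw [← Preadditive.comp_add]; exact hs
    rcases IsLocalRing.isUnit_or_isUnit_of_add_one h1 with h | h
    · exact ha (isSplitEpi_of_mul_eq_one _ ((show End U from s) * ↑h.unit⁻¹)
        (by rw [← mul_assoc]; exact h.mul_val_inv))
    · exact hb (isSplitEpi_of_mul_eq_one _ ((show End U from s) * ↑h.unit⁻¹)
        (by rw [← mul_assoc]; exact h.mul_val_inv))
  smul_mem' := by
    intro c g hg hcg
    rcases hcg.exists_splitEpi with ⟨⟨s, hs⟩⟩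
    exact hg ⟨⟨c • s, by rw [Linear.smul_comp, ← Linear.comp_smul]; exact hs⟩⟩

lemma not_isSplitEpi_of_mem_radSub {U : C} (hU1 : ¬ IsZero U) (hloc : IsLocalRing (End U))
    {g : U ⟶ U} (hg : g ∈ radSub k U (op U)) : ¬ IsSplitEpi g := by
  have h : radSub k U (op U) ≤ nonSplitEpiSubmodule (k := k) U hU1 hloc := by
    rw [radSub]
    exact Submodule.span_le.mpr (fun x hx => hx)
  exact h hg

lemma id_not_mem_radSub {U : C} (hU1 : ¬ IsZero U) (hloc : IsLocalRing (End U)) :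
    𝟙 U ∉ radSub k U (op U) := fun h =>
  not_isSplitEpi_of_mem_radSub hU1 hloc h ⟨⟨𝟙 U, Category.id_comp _⟩⟩

lemma eq_zero_of_mem_radSub_comp {U M : C} (hU1 : ¬ IsZero U) (hloc : IsLocalRing (End U))
    {r : U ⟶ U} (hr : r ∈ radSub k U (op U)) {f : U ⟶ M} (hrf : r ≫ f = f) : f = 0 := by
  have hnsr : ¬ IsSplitEpi r := not_isSplitEpi_of_mem_radSub hU1 hloc hr
  have hnur : ¬ IsUnit (show End U from r) := fun h => hnsr (isSplitEpi_of_isUnit _ h)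
  have h1 : IsUnit ((1 : End U) - (show End U from r)) := by
    rcases IsLocalRing.isUnit_or_isUnit_of_add_one
        (a := (1 : End U) - (show End U from r)) (b := (show End U from r))
        (sub_add_cancel _ _) with h | h
    · exact h
    · exact absurd h hnur
  obtain ⟨u, hu⟩ := h1
  have h2 : (u⁻¹.val ≫ (𝟙 U - r)) ≫ f = f := by
    have h3 : u⁻¹.val ≫ (𝟙 U - r) = 𝟙 U := by
      show ((1 : End U) - (show End U from r)) * ↑u⁻¹ = 1
      rw [← hu, Units.mul_inv]
    rw [h3, Category.id_comp]
  rw [Category.assoc, Preadditive.sub_comp, Category.id_comp, hrf, sub_self, comp_zero] at h2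
  exact h2.symm

end Aux

section Aux2
variable {k : Type u} [Field k]
variable {C : Type u} [Category.{v} C] [Preadditive C] [Linear k C]

/-- Subfunctor of `Hom(-, M)` given by a system of submodules. -/
def subYon (M : C) (p : ∀ X : Cᵒᵖ, Submodule k (X.unop ⟶ M))
    (hp : ∀ ⦃X Y : Cᵒᵖ⦄ (u : X ⟶ Y), ∀ g ∈ p X, (Linear.leftComp k M u.unop) g ∈ p Y) :
    FunCat k C :=
  ⟨{ obj := fun X => ModuleCat.of k (p X)
     map := fun {X Y} u => ModuleCat.ofHom ((Linear.leftComp k M u.unop).restrict (hp u))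
     map_id := by
       intro X
       ext x
       exact Category.id_comp (x : X.unop ⟶ M)
     map_comp := by
       intro X Y Z u v
       ext x
       exact Category.assoc v.unop u.unop (x : X.unop ⟶ M) },
   by
    constructor
    · intro X Y f g
      ext x
      show (f + g) ≫ x.val = f ≫ x.val + g ≫ x.val
      exact Preadditive.add_comp _ _ _ f g x.val
    · intro X Y c f
      ext x
      show (c • f) ≫ x.val = c • (f ≫ x.val)
      exact CategoryTheory.Linear.smul_comp _ _ _ c f x.val⟩

def subYonToYon (M : C) (p : ∀ X : Cᵒᵖ, Submodule k (X.unop ⟶ M)) (hp) :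
    subYon M p hp ⟶ yon k M where
  hom.app X := ModuleCat.ofHom (p X).subtype
  hom.naturality X Y u := by ext x; rfl

def subYonHom (M : C) (p q : ∀ X : Cᵒᵖ, Submodule k (X.unop ⟶ M)) (hp) (hq)
    (hpq : ∀ X, p X ≤ q X) : subYon M p hp ⟶ subYon M q hq where
  hom.app X := ModuleCat.ofHom (Submodule.inclusion (hpq X))
  hom.naturality X Y u := by ext x; exact Subtype.ext rfl

lemma funCat_mono {F G : FunCat k C} (α : F ⟶ G) (h : ∀ X, Function.Injective (α.hom.app X)) :
    Mono α := by
  constructor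
  intro T a b hab
  apply InducedCategory.hom_ext
  apply NatTrans.ext
  funext X
  ext x
  have h1 : ∀ y : T ⟶ F, (y ≫ α).hom.app X x = α.hom.app X (y.hom.app X x) := fun y => rfl
  exact h X (((h1 a).symm.trans (congrArg (fun β : T ⟶ G => β.hom.app X x) hab)).trans (h1 b))

lemma funCat_zero_comp {A B D : FunCat k C} (h : B ⟶ D) : (0 : A ⟶ B) ≫ h = 0 := by
  apply InducedCategory.hom_ext
  apply NatTrans.ext
  funext X
  ext x
  show h.hom.app X ((0 : A.obj ⟶ B.obj).app X x) = (0 : A.obj ⟶ D.obj).app X x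
  exact map_zero (h.hom.app X).hom

lemma funCat_comp_zero {A B D : FunCat k C} (h : A ⟶ B) : h ≫ (0 : B ⟶ D) = 0 := by
  apply InducedCategory.hom_ext
  apply NatTrans.ext
  funext X
  ext x
  rfl

/-- The Yoneda-style natural transformation attached to an element `x ∈ G(U)`. -/
def eltNat {G : FunCat k C} {X : Cᵒᵖ} (x : G.obj.obj X) : yon k X.unop ⟶ G where
  hom.app Y := ModuleCat.ofHom
    { toFun := fun g => G.obj.map g.op x
      map_add' := fun g g' => by
        show G.obj.map ((g + g').op) x = G.obj.map g.op x + G.obj.map g'.op x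
        rw [G.property.1 g g']; rfl
      map_smul' := fun c g => by
        show G.obj.map ((c • g).op) x = c • G.obj.map g.op x
        rw [G.property.2 c g]; rfl }
  hom.naturality Y Z u := by
    ext g
    show G.obj.map (u.unop ≫ g).op x = G.obj.map u ((G.obj.map g.op) x)
    exact ConcreteCategory.congr_hom (G.obj.map_comp (g : Y.unop ⟶ X.unop).op u) x

lemma eval_zero_of_mono {M U : C} {G : FunCat k C} (j : G ⟶ yon k M) (hj : Mono j)
    (h0 : ∀ f : U ⟶ M, f = 0) (x : G.obj.obj (op U)) : x = 0 := by
  have hxj : eltNat (k := k) x ≫ j = 0 := by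
    apply InducedCategory.hom_ext
    apply NatTrans.ext
    funext Y
    ext g
    show j.hom.app Y (G.obj.map g.op x) = (0 : (yon k U).obj ⟶ (yon k M).obj).app Y g
    have h2 : j.hom.app Y (G.obj.map g.op x) =
        ((yon k M).obj.map g.op) (j.hom.app (op U) x) :=
      ConcreteCategory.congr_hom (j.hom.naturality g.op) x
    have h3 : ((yon k M).obj.map g.op) (j.hom.app (op U) x) = g ≫ (j.hom.app (op U) x) := rfl
    rw [h2, h3, h0 (j.hom.app (op U) x)]
    exact comp_zero (f := (g : Y.unop ⟶ U)) (Z := M)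
  have hz : eltNat (k := k) x = 0 := by
    rw [← cancel_mono j, hxj, funCat_zero_comp]
  have h4 : (eltNat (k := k) x).hom.app (op U) (𝟙 U) = x := by
    show G.obj.map (𝟙 U).op x = x
    rw [CategoryTheory.op_id, CategoryTheory.Functor.map_id]
    rfl
  have h5 : (eltNat (k := k) x).hom.app (op U) (𝟙 U) = 0 := by
    rw [hz]
    rfl
  rw [← h4, h5]
end Aux2

section Aux3
variable {k : Type u} [Field k]
variable {C : Type u} [Category.{v} C] [Preadditive C] [Linear k C]

lemma sFun_map_mk {N : C} {X Y : Cᵒᵖ} (u : X ⟶ Y) (g : X.unop ⟶ N) :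
    (sFun k N).obj.map u (Submodule.Quotient.mk g) =
      Submodule.Quotient.mk (u.unop ≫ g) := by
  show Submodule.mapQ _ _ (Linear.leftComp k N u.unop) (radSub_le_comap k N u)
      (Submodule.Quotient.mk g) = _
  rw [Submodule.mapQ_apply]
  rfl

lemma nonzero_of_compFactor {U M : C} (hU : Indec U) (hloc : IsLocalRing (End U))
    (h : IsCompositionFactorOf k C (sFun k U) (yon k M)) : ∃ f : U ⟶ M, f ≠ 0 := by
  by_contra hcon
  push_neg at hcon
  obtain ⟨G₀, G₁, ι, j, π, w, hι, hj, ⟨hcolim⟩⟩ := h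
  have hG1 : ∀ x : G₁.obj.obj (op U), x = 0 := eval_zero_of_mono j hj hcon
  have hπ : π = 0 := by
    apply InducedCategory.hom_ext
    apply NatTrans.ext
    funext X
    ext x
    show π.hom.app X x = (0 : G₁.obj ⟶ (sFun k U).obj).app X x
    obtain ⟨g, hg⟩ := Submodule.Quotient.mk_surjective (radSub k U X) (π.hom.app X x)
    by_cases hse : IsSplitEpi g
    · exfalso
      rcases hse.exists_splitEpi with ⟨⟨s, hs⟩⟩
      have hnat : π.hom.app (op U) (G₁.obj.map s.op x) =
          (sFun k U).obj.map s.op (π.hom.app X x) :=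
        ConcreteCategory.congr_hom (π.hom.naturality (s.op : X ⟶ op U)) x
      have hL : π.hom.app (op U) (G₁.obj.map s.op x) = 0 := by
        rw [hG1 (G₁.obj.map s.op x)]
        exact map_zero _
      have hR : (sFun k U).obj.map s.op (π.hom.app X x) =
          Submodule.Quotient.mk (s ≫ g) := by
        rw [← hg]
        exact sFun_map_mk s.op g
      have hmk : (Submodule.Quotient.mk (s ≫ g) : _ ⧸ radSub k U (op U)) = 0 := by
        rw [← hR, ← hnat, hL]
        rfl
      rw [hs, Submodule.Quotient.mk_eq_zero] at hmk
      exact id_not_mem_radSub hU.1 hloc hmk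
    · show π.hom.app X x = 0
      rw [← hg]
      exact (Submodule.Quotient.mk_eq_zero _).mpr (Submodule.subset_span hse)
  have h1 : (𝟙 (sFun k U) : sFun k U ⟶ sFun k U) = 0 := by
    apply Cofork.IsColimit.hom_ext hcolim
    show π ≫ (𝟙 (sFun k U)) = π ≫ (0 : sFun k U ⟶ sFun k U)
    rw [Category.comp_id, funCat_comp_zero]
    exact hπ
  have h3 : (Submodule.Quotient.mk (𝟙 U) : _ ⧸ radSub k U (op U)) = 0 :=
    ConcreteCategory.congr_hom
      (congrArg (fun α : sFun k U ⟶ sFun k U => α.hom.app (op U)) h1)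
      (Submodule.Quotient.mk (𝟙 U))
  rw [Submodule.Quotient.mk_eq_zero] at h3
  exact id_not_mem_radSub hU.1 hloc h3

lemma compFactor_of_nonzero {U M : C} (f : U ⟶ M) (hf : f ≠ 0) :
    IsCompositionFactorOf k C (sFun k U) (yon k M) := by
  set φ : ∀ X : Cᵒᵖ, (X.unop ⟶ U) →ₗ[k] (X.unop ⟶ M) :=
    fun X => Linear.rightComp k X.unop f with hφdef
  have hφ : ∀ (X : Cᵒᵖ) (g : X.unop ⟶ U), φ X g = g ≫ f := fun X g => rfl
  set p₁ : ∀ X : Cᵒᵖ, Submodule k (X.unop ⟶ M) := fun X => LinearMap.range (φ X) with hp₁def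
  set p₀ : ∀ X : Cᵒᵖ, Submodule k (X.unop ⟶ M) :=
    fun X => (radSub k U X).map (φ X) with hp₀def
  have hcompat : ∀ ⦃X Y : Cᵒᵖ⦄ (u : X ⟶ Y) (g' : X.unop ⟶ U),
      φ Y (u.unop ≫ g') = (Linear.leftComp k M u.unop) (φ X g') := by
    intro X Y u g'
    rw [hφ, hφ, Linear.leftComp_apply, Category.assoc]
  have hp₁ : ∀ ⦃X Y : Cᵒᵖ⦄ (u : X ⟶ Y), ∀ g ∈ p₁ X, (Linear.leftComp k M u.unop) g ∈ p₁ Y := by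
    intro X Y u g hg
    obtain ⟨g', rfl⟩ := hg
    exact ⟨u.unop ≫ g', hcompat u g'⟩
  have hp₀ : ∀ ⦃X Y : Cᵒᵖ⦄ (u : X ⟶ Y), ∀ g ∈ p₀ X, (Linear.leftComp k M u.unop) g ∈ p₀ Y := by
    intro X Y u g hg
    obtain ⟨r, hr, rfl⟩ := hg
    have hr' : u.unop ≫ r ∈ radSub k U Y := by
      have h := radSub_le_comap k U u hr
      rwa [Submodule.mem_comap, Linear.leftComp_apply] at h
    exact ⟨u.unop ≫ r, hr', hcompat u r⟩
  -- the projection onto the simple quotient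
  have hker : ∀ X : Cᵒᵖ, LinearMap.ker (φ X) ≤ LinearMap.ker (radSub k U X).mkQ := by
    intro X g hg
    rw [LinearMap.mem_ker, hφ] at hg
    rw [Submodule.ker_mkQ]
    apply Submodule.subset_span
    intro hse
    rcases hse.exists_splitEpi with ⟨⟨s, hs⟩⟩
    apply hf
    calc f = 𝟙 U ≫ f := (Category.id_comp f).symm
      _ = (s ≫ g) ≫ f := by rw [hs]
      _ = s ≫ (g ≫ f) := Category.assoc _ _ _
      _ = 0 := by rw [hg, comp_zero]
  set piApp : ∀ X : Cᵒᵖ, ↥(p₁ X) →ₗ[k] ((X.unop ⟶ U) ⧸ radSub k U X) :=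
    fun X => (Submodule.liftQ (LinearMap.ker (φ X)) (radSub k U X).mkQ (hker X)) ∘ₗ
      ((φ X).quotKerEquivRange.symm : ↥(LinearMap.range (φ X)) →ₗ[k] _) with hpiAppdef
  have hkey : ∀ (X : Cᵒᵖ) (g : X.unop ⟶ U),
      piApp X ((φ X).rangeRestrict g) = Submodule.Quotient.mk g := by
    intro X g
    have h1 : (φ X).quotKerEquivRange.symm ((φ X).rangeRestrict g) =
        Submodule.Quotient.mk g := by
      rw [LinearEquiv.symm_apply_eq]
      refine Subtype.ext ?_
      rw [LinearMap.quotKerEquivRange_apply_mk]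
      rfl
    show Submodule.liftQ (LinearMap.ker (φ X)) (radSub k U X).mkQ (hker X)
      ((φ X).quotKerEquivRange.symm ((φ X).rangeRestrict g)) = _
    rw [h1, Submodule.liftQ_apply]
    rfl
  have hrrval : ∀ (X : Cᵒᵖ) (g : X.unop ⟶ U),
      Subtype.val ((φ X).rangeRestrict g) = g ≫ f :=
    fun X g => hφ X g
  have hmaprr : ∀ ⦃X Y : Cᵒᵖ⦄ (u : X ⟶ Y) (g : X.unop ⟶ U),
      ((subYon M p₁ hp₁).obj.map u) ((φ X).rangeRestrict g) =
        (φ Y).rangeRestrict (u.unop ≫ g) := by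
    intro X Y u g
    refine Subtype.ext ?_
    show u.unop ≫ Subtype.val ((φ X).rangeRestrict g) =
      Subtype.val ((φ Y).rangeRestrict (u.unop ≫ g))
    rw [hrrval, hrrval, Category.assoc]
  set π : subYon M p₁ hp₁ ⟶ sFun k U :=
    ⟨{ app := fun X => ModuleCat.ofHom (piApp X)
       naturality := by
        intro X Y u
        ext x
        obtain ⟨g, rfl⟩ := (φ X).surjective_rangeRestrict x
        show piApp Y (((subYon M p₁ hp₁).obj.map u) ((φ X).rangeRestrict g)) =
          (sFun k U).obj.map u (piApp X ((φ X).rangeRestrict g))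
        rw [hmaprr, hkey, hkey, sFun_map_mk] }⟩ with hπdef
  have hπapp : ∀ (X : Cᵒᵖ) (g : X.unop ⟶ U),
      π.hom.app X ((φ X).rangeRestrict g) = Submodule.Quotient.mk g := hkey
  have hle : ∀ X, p₀ X ≤ p₁ X := by
    intro X
    simp only [hp₀def, hp₁def]
    exact LinearMap.map_le_range
  set ι : subYon M p₀ hp₀ ⟶ subYon M p₁ hp₁ :=
    subYonHom M p₀ p₁ hp₀ hp₁ hle with hιdef
  have hw : ι ≫ π = 0 := by
    apply InducedCategory.hom_ext
    apply NatTrans.ext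
    funext X
    ext x
    obtain ⟨xv, hxv⟩ := x
    obtain ⟨r, hr, hrx⟩ := hxv
    have hval : ι.hom.app X ⟨xv, ⟨r, hr, hrx⟩⟩ = (φ X).rangeRestrict r := by
      refine Subtype.ext ?_
      show xv = Subtype.val ((φ X).rangeRestrict r)
      rw [hrrval, ← hφ, hrx]
    show π.hom.app X (ι.hom.app X ⟨xv, ⟨r, hr, hrx⟩⟩) =
      (0 : (subYon M p₀ hp₀).obj ⟶ (sFun k U).obj).app X ⟨xv, ⟨r, hr, hrx⟩⟩
    rw [hval, hπapp]
    show _ = (0 : ((X.unop ⟶ U) ⧸ radSub k U X))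
    rw [Submodule.Quotient.mk_eq_zero]
    exact hr
  have hsker : ∀ (T : FunCat k C) (α : subYon M p₁ hp₁ ⟶ T) (hα : ι ≫ α = 0) (X : Cᵒᵖ),
      radSub k U X ≤
        LinearMap.ker ((α.hom.app X).hom ∘ₗ (φ X).rangeRestrict) := by
    intro T α hα X
    rw [radSub, Submodule.span_le]
    intro g hse
    rw [SetLike.mem_coe, LinearMap.mem_ker]
    have hmem : (φ X) g ∈ p₀ X := ⟨g, Submodule.subset_span hse, rfl⟩
    have hval : (φ X).rangeRestrict g = ι.hom.app X ⟨(φ X) g, hmem⟩ := Subtype.ext rfl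
    calc α.hom.app X ((φ X).rangeRestrict g)
        = α.hom.app X (ι.hom.app X ⟨(φ X) g, hmem⟩) := congrArg (fun y => α.hom.app X y) hval
      _ = 0 := ConcreteCategory.congr_hom
          (congrArg (fun β : subYon M p₀ hp₀ ⟶ T => β.hom.app X) hα) ⟨(φ X) g, hmem⟩
  refine ⟨subYon M p₀ hp₀, subYon M p₁ hp₁, ι, subYonToYon M p₁ hp₁, π, hw,
    funCat_mono _ (fun X => Submodule.inclusion_injective (hle X)),
    funCat_mono _ (fun X => Submodule.injective_subtype (p₁ X)), ⟨?_⟩⟩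
  refine Cofork.IsColimit.mk _ (fun s => ?_) (fun s => ?_) (fun s m hm => ?_)
  · -- desc
    have hcond : ι ≫ s.π = 0 := by
      have h := s.condition
      rwa [funCat_zero_comp] at h
    exact
      ⟨{ app := fun X => ModuleCat.ofHom
          (Submodule.liftQ (radSub k U X)
            ((s.π.hom.app X).hom ∘ₗ (φ X).rangeRestrict)
            (hsker s.pt s.π hcond X))
         naturality := by
          intro X Y u
          ext x
          obtain ⟨g, rfl⟩ := Submodule.Quotient.mk_surjective (radSub k U X) x
          show Submodule.liftQ _ _ (hsker s.pt s.π hcond Y)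
              ((sFun k U).obj.map u (Submodule.Quotient.mk g)) =
            s.pt.obj.map u (Submodule.liftQ _ _ (hsker s.pt s.π hcond X)
              (Submodule.Quotient.mk g))
          rw [sFun_map_mk, Submodule.liftQ_apply, Submodule.liftQ_apply]
          have h4 : s.π.hom.app Y (((subYon M p₁ hp₁).obj.map u) ((φ X).rangeRestrict g)) =
              s.pt.obj.map u (s.π.hom.app X ((φ X).rangeRestrict g)) :=
            ConcreteCategory.congr_hom (s.π.hom.naturality u) ((φ X).rangeRestrict g)
          rw [hmaprr u g] at h4
          exact h4 }⟩
  · -- fac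
    apply InducedCategory.hom_ext
    apply NatTrans.ext
    funext X
    ext x
    obtain ⟨g, rfl⟩ := (φ X).surjective_rangeRestrict x
    show Submodule.liftQ _ _ (hsker s.pt s.π (by
        have h := s.condition
        rwa [funCat_zero_comp] at h) X) (π.hom.app X ((φ X).rangeRestrict g)) =
      s.π.hom.app X ((φ X).rangeRestrict g)
    rw [hπapp, Submodule.liftQ_apply]
    rfl
  · -- uniq
    apply InducedCategory.hom_ext
    apply NatTrans.ext
    funext X
    ext x
    obtain ⟨g, rfl⟩ := Submodule.Quotient.mk_surjective (radSub k U X) x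
    have h6 : m.hom.app X (π.hom.app X ((φ X).rangeRestrict g)) =
        s.π.hom.app X ((φ X).rangeRestrict g) :=
      ConcreteCategory.congr_hom
        (congrArg (fun β : subYon M p₁ hp₁ ⟶ s.pt => β.hom.app X) hm)
        ((φ X).rangeRestrict g)
    have h5 : m.hom.app X (Submodule.Quotient.mk g) = s.π.hom.app X ((φ X).rangeRestrict g) := by
      rw [← hπapp]
      exact h6
    show m.hom.app X (Submodule.Quotient.mk g) =
      Submodule.liftQ _ _ (hsker s.pt s.π (by
        have h := s.condition
        rwa [funCat_zero_comp] at h) X) (Submodule.Quotient.mk g)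
    rw [h5, Submodule.liftQ_apply]
    rfl

end Aux3

section Aux4
variable {k : Type u} [Field k]
variable {C : Type u} [Category.{v} C] [Preadditive C] [Linear k C]

lemma serre_exists_nonzero [∀ X Y : C, FiniteDimensional k (X ⟶ Y)]
    (S : C ⥤ C) (SS : SerreStructure k S) (X Y : C) :
    (∃ f : X ⟶ Y, f ≠ 0) ↔ (∃ g : Y ⟶ S.obj X, g ≠ 0) := by
  constructor
  · rintro ⟨f, hf⟩
    have hφ : ∃ φ : Module.Dual k (X ⟶ Y), φ f ≠ 0 := by
      by_contra h
      push_neg at h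
      exact hf ((Module.forall_dual_apply_eq_zero_iff k f).mp h)
    obtain ⟨φ, hφ⟩ := hφ
    obtain ⟨g, hg⟩ := (SS.nondegen X Y).2 φ
    refine ⟨g, fun h0 => ?_⟩
    apply hφ
    rw [← hg, h0]
    show ((SS.pairing X Y).flip 0) f = 0
    rw [map_zero]
    rfl
  · rintro ⟨g, hg⟩
    have hφ : (SS.pairing X Y).flip g ≠ 0 := by
      intro h
      apply hg
      refine (SS.nondegen X Y).1 ?_
      show (SS.pairing X Y).flip g = (SS.pairing X Y).flip 0
      rw [h, map_zero]
    by_contra h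
    push_neg at h
    apply hφ
    ext f
    rw [h f, map_zero]
    rfl

lemma isZero_obj_of_equiv {D : Type u} [Category.{v} D] (E : C ≌ D) {X : C}
    (h : IsZero X) : IsZero (E.functor.obj X) := by
  constructor
  · intro Y
    obtain ⟨i⟩ := h.unique_to (E.inverse.obj Y)
    exact ⟨@Equiv.unique _ _ i (E.toAdjunction.homEquiv X Y)⟩
  · intro Y
    obtain ⟨i⟩ := h.unique_from (E.inverse.obj Y)
    exact ⟨@Equiv.unique _ _ i (E.symm.toAdjunction.homEquiv Y X).symm⟩

lemma equiv_map_zero [HasZeroObject C] (E : C ≌ C) {A B : C} :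
    E.functor.map (0 : A ⟶ B) = 0 := by
  obtain ⟨Z, hZ⟩ := HasZeroObject.zero (C := C)
  have h1 : (0 : A ⟶ B) = (0 : A ⟶ Z) ≫ (0 : Z ⟶ B) := (zero_comp).symm
  rw [h1, Functor.map_comp,
    (isZero_obj_of_equiv E hZ).eq_of_tgt (E.functor.map (0 : A ⟶ Z)) 0, zero_comp]

lemma indec_inv_obj [HasZeroObject C] (S : C ⥤ C) (SS : SerreStructure k S) {M : C}
    (hM : Indec M) : Indec (SS.inv.obj M) := by
  let E : C ≌ C := CategoryTheory.Equivalence.mk S SS.inv SS.invS.symm SS.Sinv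
  have hfunctor : E.functor = S := rfl
  constructor
  · intro hz
    have h1 : IsZero (S.obj (SS.inv.obj M)) := isZero_obj_of_equiv E hz
    exact hM.1 (IsZero.of_iso h1 (SS.Sinv.app M).symm)
  · intro e he
    have hidem : ((SS.Sinv.app M).inv ≫ S.map e ≫ (SS.Sinv.app M).hom) ≫
        ((SS.Sinv.app M).inv ≫ S.map e ≫ (SS.Sinv.app M).hom) =
        (SS.Sinv.app M).inv ≫ S.map e ≫ (SS.Sinv.app M).hom := by
      simp only [Category.assoc, Iso.hom_inv_id_assoc]
      rw [← Functor.map_comp_assoc, he]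
    have hconj : S.map e =
        (SS.Sinv.app M).hom ≫
          ((SS.Sinv.app M).inv ≫ S.map e ≫ (SS.Sinv.app M).hom) ≫ (SS.Sinv.app M).inv := by
      simp
    rcases hM.2 _ hidem with h0 | h1
    · left
      apply E.functor.map_injective
      show S.map e = S.map 0
      have hz : S.map (0 : SS.inv.obj M ⟶ SS.inv.obj M) = 0 :=
        equiv_map_zero E (A := SS.inv.obj M) (B := SS.inv.obj M)
      rw [hconj, h0, hz]
      simp
    · right
      apply E.functor.map_injective
      show S.map e = S.map (𝟙 _)
      rw [hconj, h1, CategoryTheory.Functor.map_id]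
      simp

end Aux4

lemma serre_step {k : Type u} [Field k] {C : Type u} [Category.{v} C] [Preadditive C]
    [Linear k C] [∀ X Y : C, FiniteDimensional k (X ⟶ Y)]
    (S : C ⥤ C) (SS : SerreStructure k S) (U M : C) :
    (∃ f : U ⟶ M, f ≠ 0) ↔ (∃ g : SS.inv.obj M ⟶ U, g ≠ 0) := by
  constructor
  · rintro ⟨f, hf⟩
    apply (serre_exists_nonzero S SS (SS.inv.obj M) U).mpr
    refine ⟨f ≫ (SS.Sinv.app M).inv, fun h0 => hf ?_⟩
    have h1 : (f ≫ (SS.Sinv.app M).inv) ≫ (SS.Sinv.app M).hom = f := by simp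
    rw [← h1, h0, zero_comp]
  · intro h
    obtain ⟨h', hh⟩ := (serre_exists_nonzero S SS (SS.inv.obj M) U).mp h
    refine ⟨h' ≫ (SS.Sinv.app M).hom, fun h0 => hh ?_⟩
    have h1 : (h' ≫ (SS.Sinv.app M).hom) ≫ (SS.Sinv.app M).inv = h' := by simp
    rw [← h1, h0, zero_comp]

/-- For indecomposable `U`, `M` in a category with Serre functor `S`, the
following are equivalent: `s^U` is a composition factor of `Hom_C(-,M)`; there is a nonzero
morphism `U ⟶ M`; there is a nonzero morphism `S⁻¹M ⟶ U`; `s^{S⁻¹M}` is a composition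
factor of `Hom_C(-,U)`. -/
theorem statement_7 (k : Type u) [Field k] [IsAlgClosed k]
    (C : Type u) [Category.{v} C] [Preadditive C] [CategoryTheory.Linear k C]
    [HasZeroObject C] [HasShift C ℤ] [∀ n : ℤ, (shiftFunctor C n).Additive]
    [Pretriangulated C] [HasFiniteBiproducts C]
    [∀ X Y : C, FiniteDimensional k (X ⟶ Y)]
    (hKS : IsKrullSchmidt C)
    (S : C ⥤ C) (SS : SerreStructure k S) (U M : C) (hU : Indec U) (hM : Indec M) :
    List.TFAE [
      IsCompositionFactorOf k C (sFun k U) (yon k M),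
      ∃ f : U ⟶ M, f ≠ 0,
      ∃ g : SS.inv.obj M ⟶ U, g ≠ 0,
      IsCompositionFactorOf k C (sFun k (SS.inv.obj M)) (yon k U)] := by
  have hlocU := hKS.2 U hU
  have hindec : Indec (SS.inv.obj M) := indec_inv_obj S SS hM
  have hlocI := hKS.2 _ hindec
  tfae_have 1 ↔ 2 := ⟨fun h => nonzero_of_compFactor hU hlocU h,
    fun h => by obtain ⟨f, hf⟩ := h; exact compFactor_of_nonzero f hf⟩
  tfae_have 2 ↔ 3 := serre_step S SS U M
  tfae_have 3 ↔ 4 := ⟨fun h => by obtain ⟨g, hg⟩ := h; exact compFactor_of_nonzero g hg,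
    fun h => nonzero_of_compFactor hindec hlocI h⟩
  tfae_finish

end GradedCenter
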